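/- Let a, b : ℕ → Bool be bit sequences. For i ≤ j define the propagate bit p_{j,i} = ⋀_{l=i}^{j} (a_l ⊕ b_l) and the generate bit g_{j,i} = decide((∑_{l=i}^{j} a_l.toNat · 2^{l-i}) + (∑_{l=i}^{j} b_l.toNat · 2^{l-i}) ≥ 2^{j-i+1}). For any Boolean carry-in c, define the block carry-out carryOut(i, j, c) by the full-adder carry recurrence over positions i, i+1, …, j: starting from carry-in c at position i, at each position l the new carry is (a_l ∧ b_l) ∨ (a_l ∧ carry) ∨ (b_l ∧ carry). Then for all i ≤ j and all c : Bool, carryOut(i, j, c) = g_{j,i} ∨ (p_{j,i} ∧ c). -/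
import Mathlib


/-- The propagate bit `p_{j,i} = ⋀_{l=i}^{j} (a_l ⊕ b_l)` of the block of bit
positions `i` through `j`. -/
def propagate (a b : ℕ → Bool) (i j : ℕ) : Bool :=
  decide (∀ l ∈ Finset.Icc i j, xor (a l) (b l) = true)

/-- The generate bit
`g_{j,i} = decide((∑_{l=i}^{j} a_l·2^{l-i}) + (∑_{l=i}^{j} b_l·2^{l-i}) ≥ 2^{j-i+1})`
of the block of bit positions `i` through `j`. -/
def generate (a b : ℕ → Bool) (i j : ℕ) : Bool :=
  decide (2 ^ (j - i + 1) ≤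
    (∑ l ∈ Finset.Icc i j, (a l).toNat * 2 ^ (l - i)) +
      (∑ l ∈ Finset.Icc i j, (b l).toNat * 2 ^ (l - i)))

/-- `carryOut a b i j c` is the carry out of the block of bit positions
`i, i+1, …, j` when the carry into position `i` is `c`, computed by the
full-adder carry recurrence: at each position `l` the new carry is
`(a_l ∧ b_l) ∨ (a_l ∧ carry) ∨ (b_l ∧ carry)`. (Here `j = i + t` where
`t` is the recursion depth.) -/
def carryOut (a b : ℕ → Bool) (i : ℕ) (c : Bool) : ℕ → Bool
  | 0 => (a i && b i) || (a i && c) || (b i && c)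
  | t + 1 =>
      (a (i + t + 1) && b (i + t + 1)) ||
        (a (i + t + 1) && carryOut a b i c t) || (b (i + t + 1) && carryOut a b i c t)

lemma Icc_split (i t : ℕ) :
    Finset.Icc i (i + t + 1) = insert (i + t + 1) (Finset.Icc i (i + t)) :=
  (Finset.insert_Icc_right_eq_Icc_add_one (by omega)).symm

lemma sum_lt (x : ℕ → Bool) (i t : ℕ) :
    ∑ l ∈ Finset.Icc i (i + t), (x l).toNat * 2 ^ (l - i) < 2 ^ (t + 1) := by
  induction t with
  | zero => simp [Finset.Icc_self]; cases x i <;> simp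
  | succ t ih =>
    rw [show i + (t+1) = i + t + 1 from rfl, Icc_split,
      Finset.sum_insert (by simp)]
    have h1 : (x (i + t + 1)).toNat ≤ 1 := by cases x (i+t+1) <;> simp
    have h2 : (2:ℕ) ^ (t + 1 + 1) = 2 ^ (t+1) + 2^(t+1) := by ring
    have h3 : (x (i+t+1)).toNat * 2 ^ (i + t + 1 - i) ≤ 2 ^ (t+1) := by
      rw [show i + t + 1 - i = t + 1 by omega]
      calc _ ≤ 1 * 2 ^ (t+1) := Nat.mul_le_mul_right _ h1
      _ = 2 ^ (t+1) := one_mul _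
    omega

lemma carry_decide (a b : ℕ → Bool) (i t : ℕ) (c : Bool) :
    carryOut a b i c t = decide (2 ^ (t + 1) ≤
      (∑ l ∈ Finset.Icc i (i + t), (a l).toNat * 2 ^ (l - i)) +
        (∑ l ∈ Finset.Icc i (i + t), (b l).toNat * 2 ^ (l - i)) + c.toNat) := by
  induction t with
  | zero =>
    simp only [carryOut, Nat.add_zero, Finset.Icc_self, Finset.sum_singleton, Nat.sub_self,
      pow_zero, mul_one, pow_one]
    cases hA : a i <;> cases hB : b i <;> cases c <;> simp [hA, hB]
  | succ t ih =>
    have ha := sum_lt a i t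
    have hb := sum_lt b i t
    have hc : c.toNat ≤ 1 := by cases c <;> simp
    rw [show i + (t+1) = i + t + 1 from rfl, Icc_split,
      Finset.sum_insert (by simp), Finset.sum_insert (by simp),
      show i + t + 1 - i = t + 1 by omega]
    simp only [carryOut, ih]
    have h2 : (2:ℕ) ^ (t + 1 + 1) = 2 ^ (t+1) + 2^(t+1) := by ring
    cases hA : a (i+t+1) <;> cases hB : b (i+t+1) <;>
      simp only [Bool.toNat_true, Bool.toNat_false, Bool.true_and, Bool.false_and,
        Bool.false_or, Bool.or_false, Bool.true_or, Bool.or_true, Bool.and_true,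
        Bool.and_false, one_mul, zero_mul, Nat.zero_add]
    · exact (decide_eq_false (by omega)).symm
    · rw [decide_eq_decide]; omega
    · rw [decide_eq_decide]; omega
    · exact (decide_eq_true (by omega)).symm

lemma prop_iff (a b : ℕ → Bool) (i t : ℕ) :
    (∀ l ∈ Finset.Icc i (i + t), xor (a l) (b l) = true) ↔
      (∑ l ∈ Finset.Icc i (i + t), (a l).toNat * 2 ^ (l - i)) +
        (∑ l ∈ Finset.Icc i (i + t), (b l).toNat * 2 ^ (l - i)) = 2 ^ (t + 1) - 1 := by
  induction t with
  | zero =>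
    simp only [Nat.add_zero, Finset.Icc_self, Finset.sum_singleton, Finset.mem_singleton,
      forall_eq, Nat.sub_self, pow_zero, mul_one]
    cases a i <;> cases b i <;> simp
  | succ t ih =>
    have ha := sum_lt a i t
    have hb := sum_lt b i t
    rw [show i + (t+1) = i + t + 1 from rfl, Icc_split,
      Finset.sum_insert (by simp), Finset.sum_insert (by simp),
      show i + t + 1 - i = t + 1 by omega]
    rw [Finset.forall_mem_insert, ih]
    have h2 : (2:ℕ) ^ (t + 1 + 1) = 2 ^ (t+1) + 2^(t+1) := by ring
    have hp : (1:ℕ) ≤ 2 ^ (t+1) := Nat.one_le_two_pow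
    constructor
    · rintro ⟨hx, hs⟩
      cases hA : a (i+t+1) <;> cases hB : b (i+t+1) <;> rw [hA, hB] at hx <;>
        simp_all <;> omega
    · intro h
      cases hA : a (i+t+1) <;> cases hB : b (i+t+1) <;> rw [hA, hB] at h <;>
        simp_all <;> omega

/-- **Block carry via generate/propagate.** For all `i ≤ j` and every carry-in
`c`, the carry out of the block of positions `i` through `j` equals
`g_{j,i} ∨ (p_{j,i} ∧ c)`. -/
theorem carryOut_eq_generate_or_propagate (a b : ℕ → Bool) (i j : ℕ) (hij : i ≤ j)
    (c : Bool) :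
    carryOut a b i c (j - i) = (generate a b i j || (propagate a b i j && c)) := by
  obtain ⟨t, rfl⟩ : ∃ t, j = i + t := ⟨j - i, by omega⟩
  rw [show i + t - i = t by omega, carry_decide, generate, propagate,
    show i + t - i = t by omega]
  have ha := sum_lt a i t
  have hb := sum_lt b i t
  have hp := prop_iff a b i t
  set S := (∑ l ∈ Finset.Icc i (i + t), (a l).toNat * 2 ^ (l - i)) +
      (∑ l ∈ Finset.Icc i (i + t), (b l).toNat * 2 ^ (l - i))
  cases c
  · simp only [Bool.toNat_false, Nat.add_zero, Bool.and_false, Bool.or_false]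
  · simp only [Bool.toNat_true, Bool.and_true]
    rcases Classical.em (∀ l ∈ Finset.Icc i (i + t), xor (a l) (b l) = true) with h | h
    · rw [decide_eq_true h, Bool.or_true]
      have := hp.mp h
      have h1 : (1:ℕ) ≤ 2 ^ (t+1) := Nat.one_le_two_pow
      exact decide_eq_true (by omega)
    · have hS : ¬ S = 2 ^ (t+1) - 1 := fun hs => h (hp.mpr hs)
      rw [decide_eq_false h, Bool.or_false, decide_eq_decide]
      omega
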